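/- If f : ℂ → ℂ is continuously differentiable and vanishes on a neighborhood of the boundary circle ∂D of the closed unit disc D, then for every w in the open unit disc, f(w) = -(1/π) ∫_D (∂f/∂z̄)(z)/(z - w) dm(z), where m is Lebesgue measure. -/

import Mathlib

open MeasureTheory Real Set

/-- The Wirtinger derivative `∂f/∂z̄ = (1/2)(∂f/∂x + i ∂f/∂y)`. -/
noncomputable def wirtinger (f : ℂ → ℂ) (z : ℂ) : ℂ :=
  (fderiv ℝ f z 1 + Complex.I * fderiv ℝ f z Complex.I) / 2

noncomputable def ec (θ : ℝ) : ℂ := Real.cos θ + Real.sin θ * Complex.I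

lemma ec_abs (θ : ℝ) : ‖ec θ‖ = 1 := by
  unfold ec; rw [Complex.ofReal_cos, Complex.ofReal_sin]
  exact Complex.norm_cos_add_sin_mul_I θ

lemma continuous_ec : Continuous ec := by
  unfold ec
  exact (Complex.continuous_ofReal.comp Real.continuous_cos).add
    ((Complex.continuous_ofReal.comp Real.continuous_sin).mul continuous_const)

lemma ec_hasDerivAt (θ : ℝ) : HasDerivAt ec (Complex.I * ec θ) θ := by
  have h1 := (Real.hasDerivAt_cos θ).ofReal_comp
  have h2 : HasDerivAt (fun t : ℝ => (Real.sin t : ℂ) * Complex.I)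
      ((Real.cos θ : ℂ) * Complex.I) θ :=
    ((Real.hasDerivAt_sin θ).ofReal_comp).mul_const Complex.I
  have := h1.add h2
  refine this.congr_deriv (Eq.symm ?_)
  unfold ec
  rw [Complex.ofReal_neg]
  linear_combination (Real.sin θ : ℂ) * Complex.I_sq


lemma ec_pi_eq : ec π = ec (-π) := by
  simp [ec, Real.cos_neg, Real.sin_neg]

lemma clm_real_mul (D : ℂ →L[ℝ] ℂ) (r : ℝ) (v : ℂ) : D ((r:ℂ) * v) = (r:ℂ) * D v := by
  rw [← Complex.real_smul, ContinuousLinearMap.map_smul, Complex.real_smul]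

lemma radial_hasDerivAt (G : ℂ → ℂ) (hG : Differentiable ℝ G) (θ : ℝ) (r : ℝ) :
    HasDerivAt (fun s : ℝ => G ((s:ℂ) * ec θ)) (fderiv ℝ G ((r:ℂ) * ec θ) (ec θ)) r := by
  have h1 : HasDerivAt (fun s : ℝ => (s:ℂ) * ec θ) (ec θ) r := by
    simpa using ((hasDerivAt_id r).ofReal_comp.mul_const (ec θ))
  exact (hG ((r:ℂ) * ec θ)).hasFDerivAt.comp_hasDerivAt r h1

lemma angular_hasDerivAt (G : ℂ → ℂ) (hG : Differentiable ℝ G) (r : ℝ) (θ : ℝ) :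
    HasDerivAt (fun t : ℝ => G ((r:ℂ) * ec t))
      (fderiv ℝ G ((r:ℂ) * ec θ) ((r:ℂ) * (Complex.I * ec θ))) θ := by
  have h1 : HasDerivAt (fun t : ℝ => (r:ℂ) * ec t) ((r:ℂ) * (Complex.I * ec θ)) θ :=
    (ec_hasDerivAt θ).const_mul _
  exact (hG ((r:ℂ) * ec θ)).hasFDerivAt.comp_hasDerivAt θ h1

lemma integrableOn_target_of (Φ : ℝ × ℝ → ℂ) (R : ℝ) (hR : 0 < R)
    (hc : Continuous Φ) (h0 : ∀ p : ℝ × ℝ, R < p.1 → Φ p = 0) :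
    IntegrableOn Φ (Set.Ioi (0:ℝ) ×ˢ Set.Ioo (-π) π) := by
  have hS : IntegrableOn Φ (Set.Ioc (0:ℝ) R ×ˢ Set.Ioo (-π) π) := by
    apply (hc.continuousOn.integrableOn_compact
      ((isCompact_Icc (a := (0:ℝ)) (b := R)).prod (isCompact_Icc (a := -π) (b := π)))).mono_set
    exact Set.prod_mono Set.Ioc_subset_Icc_self Set.Ioo_subset_Icc_self
  have hmeas : MeasurableSet (Set.Ioi (0:ℝ) ×ˢ Set.Ioo (-π) π \
      Set.Ioc (0:ℝ) R ×ˢ Set.Ioo (-π) π) :=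
    ((measurableSet_Ioi.prod measurableSet_Ioo).diff
      (measurableSet_Ioc.prod measurableSet_Ioo))
  have hT : IntegrableOn Φ (Set.Ioi (0:ℝ) ×ˢ Set.Ioo (-π) π \
      Set.Ioc (0:ℝ) R ×ˢ Set.Ioo (-π) π) := by
    have : ∀ p ∈ (Set.Ioi (0:ℝ) ×ˢ Set.Ioo (-π) π \
        Set.Ioc (0:ℝ) R ×ˢ Set.Ioo (-π) π), Φ p = (0 : ℂ) := by
      rintro ⟨r, θ⟩ ⟨⟨hr, hθ⟩, hnot⟩
      apply h0
      by_contra hle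
      exact hnot ⟨⟨hr, not_lt.1 hle⟩, hθ⟩
    exact (integrableOn_congr_fun this hmeas).mpr (integrableOn_zero)
  exact (hS.union hT).mono_set (fun p hp => by
    by_cases h : p ∈ Set.Ioc (0:ℝ) R ×ˢ Set.Ioo (-π) π
    · exact Set.mem_union_left _ h
    · exact Set.mem_union_right _ ⟨hp, h⟩)

lemma polar_identity (D : ℂ →L[ℝ] ℂ) (r θ : ℝ) (hr : 0 < r) :
    r • ((D 1 + Complex.I * D Complex.I) / 2 / ((r : ℂ) * ec θ)) =
      (D (ec θ) + Complex.I * D (Complex.I * ec θ)) / 2 := by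
  have h1 : D (ec θ) = Real.cos θ • D 1 + Real.sin θ • D Complex.I := by
    have : ec θ = Real.cos θ • (1:ℂ) + Real.sin θ • Complex.I := by
      simp [ec, Complex.real_smul]
    rw [this, map_add, ContinuousLinearMap.map_smul, ContinuousLinearMap.map_smul]
  have h2 : D (Complex.I * ec θ) = (- Real.sin θ) • D 1 + Real.cos θ • D Complex.I := by
    have : Complex.I * ec θ = (- Real.sin θ) • (1:ℂ) + Real.cos θ • Complex.I := by
      simp only [ec, Complex.real_smul, Complex.ofReal_neg]
      linear_combination Complex.I_sq * (Real.sin θ : ℂ)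
    rw [this, map_add, ContinuousLinearMap.map_smul, ContinuousLinearMap.map_smul]
  rw [h1, h2]
  have h : ((Real.sin θ : ℂ))^2 + ((Real.cos θ : ℂ))^2 = 1 := by
    norm_cast; exact Real.sin_sq_add_cos_sq θ
  have hu : ec θ * ((Real.cos θ : ℂ) - Real.sin θ * Complex.I) = 1 := by
    unfold ec
    linear_combination h - Complex.I_sq * ((Real.sin θ : ℂ))^2
  have hr0 : (r:ℂ) ≠ 0 := by exact_mod_cast hr.ne'
  have he : ec θ ≠ 0 := by
    intro h0
    have := ec_abs θ
    rw [h0] at this; simp at this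
  rw [Complex.real_smul, Complex.real_smul, Complex.real_smul, neg_smul, Complex.real_smul,
    Complex.real_smul]
  rw [div_eq_mul_inv _ ((r:ℂ) * ec θ), mul_inv, ← eq_inv_of_mul_eq_one_right hu]
  linear_combination ((D 1 + Complex.I * D Complex.I) / 2 * ((Real.cos θ : ℂ) - Real.sin θ * Complex.I)) *
    (mul_inv_cancel₀ hr0) + (-(Real.sin θ : ℂ) * D Complex.I / 2) * Complex.I_sq

lemma pompeiu_zero (G : ℂ → ℂ) (hG : ContDiff ℝ 1 G) (R : ℝ) (hR : 0 < R)
    (hsupp : ∀ z : ℂ, R ≤ ‖z‖ → G z = 0) :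
    ∫ z : ℂ, wirtinger G z / z = -(Real.pi : ℂ) * G 0 := by
  have hGd : Differentiable ℝ G := hG.differentiable one_ne_zero
  have hfc : Continuous (fderiv ℝ G) := hG.continuous_fderiv one_ne_zero
  have hfd0 : ∀ z : ℂ, R < ‖z‖ → fderiv ℝ G z = 0 := by
    intro z hz
    have hop : IsOpen {w : ℂ | R < ‖w‖} :=
      isOpen_lt continuous_const continuous_norm
    have hev : G =ᶠ[nhds z] (fun _ => (0:ℂ)) :=
      Filter.eventuallyEq_of_mem (hop.mem_nhds hz) (fun w hw => hsupp w (le_of_lt hw))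
    rw [hev.fderiv_eq]
    exact fderiv_const_apply 0
  -- the two pieces of the polar integrand
  set Φ : ℝ × ℝ → ℂ := fun p => fderiv ℝ G ((p.1:ℂ) * ec p.2) (ec p.2) with hΦdef
  set Ψ : ℝ × ℝ → ℂ :=
    fun p => Complex.I * fderiv ℝ G ((p.1:ℂ) * ec p.2) (Complex.I * ec p.2) with hΨdef
  have hmap : Continuous fun p : ℝ × ℝ => ((p.1:ℂ) * ec p.2) :=
    (Complex.continuous_ofReal.comp continuous_fst).mul (continuous_ec.comp continuous_snd)
  have hΦc : Continuous Φ :=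
    (hfc.comp hmap).clm_apply (continuous_ec.comp continuous_snd)
  have hΨc : Continuous Ψ :=
    continuous_const.mul ((hfc.comp hmap).clm_apply
      (continuous_const.mul (continuous_ec.comp continuous_snd)))
  have habs : ∀ (r : ℝ), 0 < r → ∀ θ, ‖(r:ℂ) * ec θ‖ = r := by
    intro r hr θ
    rw [norm_mul, ec_abs, Complex.norm_real, Real.norm_eq_abs, abs_of_pos hr, mul_one]
  have hΦ0 : ∀ p : ℝ × ℝ, R < p.1 → Φ p = 0 := by
    intro p hp
    have : fderiv ℝ G ((p.1:ℂ) * ec p.2) = 0 := by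
      apply hfd0; rw [habs p.1 (hR.trans hp) p.2]; exact hp
    simp [hΦdef, this]
  have hΨ0 : ∀ p : ℝ × ℝ, R < p.1 → Ψ p = 0 := by
    intro p hp
    have : fderiv ℝ G ((p.1:ℂ) * ec p.2) = 0 := by
      apply hfd0; rw [habs p.1 (hR.trans hp) p.2]; exact hp
    simp [hΨdef, this]
  have hΦint : IntegrableOn Φ (Set.Ioi (0:ℝ) ×ˢ Set.Ioo (-π) π) :=
    integrableOn_target_of Φ R hR hΦc hΦ0
  have hΨint : IntegrableOn Ψ (Set.Ioi (0:ℝ) ×ˢ Set.Ioo (-π) π) :=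
    integrableOn_target_of Ψ R hR hΨc hΨ0
  -- change to polar coordinates
  have hpolar : (∫ p in polarCoord.target,
        p.1 • (wirtinger G (Complex.polarCoord.symm p) / (Complex.polarCoord.symm p)))
      = ∫ z : ℂ, wirtinger G z / z :=
    Complex.integral_comp_polarCoord_symm (fun z => wirtinger G z / z)
  rw [← hpolar]
  have htarget : polarCoord.target = Set.Ioi (0:ℝ) ×ˢ Set.Ioo (-π) π := rfl
  have hcongr : ∀ p ∈ Set.Ioi (0:ℝ) ×ˢ Set.Ioo (-π) π,
      p.1 • (wirtinger G (Complex.polarCoord.symm p) / (Complex.polarCoord.symm p))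
        = (Φ p + Ψ p) / 2 := by
    rintro ⟨r, θ⟩ ⟨hr, hθ⟩
    have hsymm : Complex.polarCoord.symm (r, θ) = (r:ℂ) * ec θ := by
      rw [Complex.polarCoord_symm_apply]; rfl
    rw [hsymm]
    have := polar_identity (fderiv ℝ G ((r:ℂ) * ec θ)) r θ hr
    simpa [wirtinger, hΦdef, hΨdef] using this
  rw [htarget, setIntegral_congr_fun (measurableSet_Ioi.prod measurableSet_Ioo) hcongr]
  have hsplit : ∫ p in Set.Ioi (0:ℝ) ×ˢ Set.Ioo (-π) π, (Φ p + Ψ p) / 2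
      = ((∫ p in Set.Ioi (0:ℝ) ×ˢ Set.Ioo (-π) π, Φ p)
        + ∫ p in Set.Ioi (0:ℝ) ×ˢ Set.Ioo (-π) π, Ψ p) / 2 := by
    rw [← integral_add hΦint hΨint]
    simp_rw [integral_div]
  rw [hsplit]
  -- the Ψ integral vanishes
  have hΨzero : (∫ p in Set.Ioi (0:ℝ) ×ˢ Set.Ioo (-π) π, Ψ p) = 0 := by
    rw [Measure.volume_eq_prod ℝ ℝ, setIntegral_prod _ (by rwa [← Measure.volume_eq_prod ℝ ℝ])]
    rw [setIntegral_congr_fun measurableSet_Ioi (g := fun _ => (0:ℂ)) ?_, integral_zero]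
    intro r hr
    have hr' : (0:ℝ) < r := hr
    have hr0 : (r:ℂ) ≠ 0 := by exact_mod_cast hr'.ne'
    have key : ∀ θ : ℝ, Ψ (r, θ) = (Complex.I * (r:ℂ)⁻¹) *
        (fderiv ℝ G ((r:ℂ) * ec θ) ((r:ℂ) * (Complex.I * ec θ))) := by
      intro θ
      rw [clm_real_mul]
      field_simp [hΨdef]
      ring
    simp_rw [key]
    rw [integral_const_mul]
    have hIoo : (∫ θ in Set.Ioo (-π) π,
        fderiv ℝ G ((r:ℂ) * ec θ) ((r:ℂ) * (Complex.I * ec θ)))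
        = G ((r:ℂ) * ec π) - G ((r:ℂ) * ec (-π)) := by
      rw [← integral_Ioc_eq_integral_Ioo,
        ← intervalIntegral.integral_of_le (by linarith [Real.pi_pos] : -π ≤ π)]
      refine intervalIntegral.integral_eq_sub_of_hasDerivAt
        (f := fun t : ℝ => G ((r:ℂ) * ec t)) ?_ ?_
      · intro θ _
        exact angular_hasDerivAt G hGd r θ
      · apply Continuous.intervalIntegrable
        exact (hfc.comp (continuous_const.mul continuous_ec)).clm_apply
          (continuous_const.mul (continuous_const.mul continuous_ec))
    rw [hIoo, ec_pi_eq, sub_self, mul_zero]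
  rw [hΨzero, add_zero]
  -- the Φ integral
  have hΦval : (∫ p in Set.Ioi (0:ℝ) ×ˢ Set.Ioo (-π) π, Φ p) = (2 * π) • (-G 0) := by
    rw [Measure.volume_eq_prod ℝ ℝ, setIntegral_prod _ (by rwa [← Measure.volume_eq_prod ℝ ℝ])]
    rw [integral_integral_swap (by
      rw [Measure.prod_restrict, ← Measure.volume_eq_prod ℝ ℝ]
      exact hΦint)]
    have hinner : ∀ θ : ℝ, (∫ r in Set.Ioi (0:ℝ), Φ (r, θ)) = -G 0 := by
      intro θ
      have hsplitIoi : Set.Ioc (0:ℝ) R ∪ Set.Ioi R = Set.Ioi 0 :=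
        Set.Ioc_union_Ioi_eq_Ioi hR.le
      have i1 : IntegrableOn (fun r : ℝ => Φ (r, θ)) (Set.Ioc (0:ℝ) R) := by
        have : Continuous (fun r : ℝ => Φ (r, θ)) := hΦc.comp (Continuous.prodMk_left θ)
        exact (this.continuousOn.integrableOn_compact
          (isCompact_Icc (a := (0:ℝ)) (b := R))).mono_set Set.Ioc_subset_Icc_self
      have i2 : IntegrableOn (fun r : ℝ => Φ (r, θ)) (Set.Ioi R) := by
        refine (integrableOn_congr_fun (g := fun _ => (0:ℂ)) ?_ measurableSet_Ioi).mpr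
          integrableOn_zero
        exact fun r hr => hΦ0 (r, θ) hr
      rw [← hsplitIoi, setIntegral_union (Set.Ioc_disjoint_Ioi le_rfl) measurableSet_Ioi i1 i2]
      have h2 : (∫ r in Set.Ioi R, Φ (r, θ)) = 0 := by
        rw [setIntegral_congr_fun measurableSet_Ioi (g := fun _ => (0:ℂ))
          (fun r hr => hΦ0 (r, θ) hr), integral_zero]
      have h1 : (∫ r in Set.Ioc (0:ℝ) R, Φ (r, θ)) = -G 0 := by
        rw [← intervalIntegral.integral_of_le hR.le]
        have := intervalIntegral.integral_eq_sub_of_hasDerivAt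
          (f := fun s : ℝ => G ((s:ℂ) * ec θ)) (f' := fun r => Φ (r, θ))
          (a := 0) (b := R)
          (fun r _ => radial_hasDerivAt G hGd θ r)
          (Continuous.intervalIntegrable (hΦc.comp (Continuous.prodMk_left θ)) _ _)
        rw [this]
        have hz1 : G ((R:ℂ) * ec θ) = 0 := by
          apply hsupp
          rw [habs R hR θ]
        have hz0 : ((0:ℝ):ℂ) * ec θ = 0 := by push_cast; ring
        rw [hz0, hz1, zero_sub]
      rw [h1, h2, add_zero]
    rw [setIntegral_congr_fun measurableSet_Ioo (g := fun _ => -G 0)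
      (fun θ _ => hinner θ), setIntegral_const]
    congr 1
    rw [measureReal_def, Real.volume_Ioo, ENNReal.toReal_ofReal (by linarith [Real.pi_pos])]
    ring
  rw [hΦval]
  rw [Complex.real_smul]
  push_cast
  ring

theorem stmt_4 (f : ℂ → ℂ) (hf : ContDiff ℝ 1 f)
    (U : Set ℂ) (hU : IsOpen U) (hsU : Metric.sphere (0:ℂ) 1 ⊆ U)
    (hfU : ∀ z ∈ U, f z = 0)
    (w : ℂ) (hw : w ∈ Metric.ball (0:ℂ) 1) :
    f w = -(Real.pi : ℂ)⁻¹ *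
        ∫ z in Metric.closedBall (0:ℂ) 1, wirtinger f z / (z - w) := by
  set F : ℂ → ℂ := Set.indicator (Metric.closedBall (0:ℂ) 1) f with hFdef
  have hFf : ∀ z ∈ Metric.ball (0:ℂ) 1 ∪ U, F z = f z := by
    intro z hz
    simp only [hFdef]
    rcases hz with hz | hz
    · exact Set.indicator_of_mem (Metric.ball_subset_closedBall hz) f
    · by_cases h : z ∈ Metric.closedBall (0:ℂ) 1
      · exact Set.indicator_of_mem h f
      · rw [Set.indicator_of_notMem h, hfU z hz]
  have hF0 : ∀ z ∈ U ∪ (Metric.closedBall (0:ℂ) 1)ᶜ, F z = 0 := by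
    intro z hz
    simp only [hFdef]
    rcases hz with hz | hz
    · by_cases h : z ∈ Metric.closedBall (0:ℂ) 1
      · rw [Set.indicator_of_mem h, hfU z hz]
      · exact Set.indicator_of_notMem h f
    · exact Set.indicator_of_notMem hz f
  have hopen1 : IsOpen (Metric.ball (0:ℂ) 1 ∪ U) := Metric.isOpen_ball.union hU
  have hopen2 : IsOpen (U ∪ (Metric.closedBall (0:ℂ) 1)ᶜ) :=
    hU.union (Metric.isClosed_closedBall.isOpen_compl)
  have hcases : ∀ z : ℂ, z ∉ Metric.ball (0:ℂ) 1 → z ∈ U ∪ (Metric.closedBall (0:ℂ) 1)ᶜ := by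
    intro z hz
    by_cases h : z ∈ Metric.closedBall (0:ℂ) 1
    · left
      apply hsU
      rw [← Metric.ball_union_sphere] at h
      exact h.resolve_left hz
    · right; exact h
  have hFc : ContDiff ℝ 1 F := by
    rw [contDiff_iff_contDiffAt]
    intro z
    by_cases hz : z ∈ Metric.ball (0:ℂ) 1 ∪ U
    · exact (hf.contDiffAt).congr_of_eventuallyEq
        (Filter.eventuallyEq_of_mem (hopen1.mem_nhds hz) hFf)
    · have hz2 := hcases z (fun h => hz (Or.inl h))
      have hz2' : z ∈ U ∪ (Metric.closedBall (0:ℂ) 1)ᶜ := by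
        rcases hz2 with h | h
        · exact Or.inl h
        · exact Or.inr h
      exact (contDiffAt_const (c := (0:ℂ))).congr_of_eventuallyEq
        (Filter.eventuallyEq_of_mem (hopen2.mem_nhds hz2') hF0)
  have hFd : Differentiable ℝ F := hFc.differentiable one_ne_zero
  have hwirt : ∀ z ∈ Metric.closedBall (0:ℂ) 1, wirtinger F z = wirtinger f z := by
    intro z hz
    have hz' : z ∈ Metric.ball (0:ℂ) 1 ∪ U := by
      rw [← Metric.ball_union_sphere] at hz
      rcases hz with h | h
      · exact Or.inl h
      · exact Or.inr (hsU h)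
    have : fderiv ℝ F z = fderiv ℝ f z :=
      Filter.EventuallyEq.fderiv_eq (Filter.eventuallyEq_of_mem (hopen1.mem_nhds hz') hFf)
    unfold wirtinger
    rw [this]
  have hfd0 : ∀ z : ℂ, z ∉ Metric.ball (0:ℂ) 1 → fderiv ℝ F z = 0 := by
    intro z hz
    have hev : F =ᶠ[nhds z] (fun _ => (0:ℂ)) :=
      Filter.eventuallyEq_of_mem (hopen2.mem_nhds (hcases z hz)) hF0
    rw [hev.fderiv_eq]
    exact fderiv_const_apply 0
  -- pass to an integral over all of ℂ
  have step1 : (∫ z in Metric.closedBall (0:ℂ) 1, wirtinger f z / (z - w))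
      = ∫ z : ℂ, wirtinger F z / (z - w) := by
    have e1 : (∫ z in Metric.closedBall (0:ℂ) 1, wirtinger f z / (z - w))
        = ∫ z in Metric.closedBall (0:ℂ) 1, wirtinger F z / (z - w) :=
      setIntegral_congr_fun measurableSet_closedBall (fun z hz => by rw [hwirt z hz])
    rw [e1]
    apply setIntegral_eq_integral_of_forall_compl_eq_zero (s := Metric.closedBall (0:ℂ) 1)
    intro z hz
    have h0 : fderiv ℝ F z = 0 := hfd0 z (fun h => hz (Metric.ball_subset_closedBall h))
    simp [wirtinger, h0]
  -- translate
  set G : ℂ → ℂ := fun z => F (z + w) with hGdef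
  have hGc : ContDiff ℝ 1 G := hFc.comp (contDiff_id.add contDiff_const)
  have hGfd : ∀ z : ℂ, fderiv ℝ G z = fderiv ℝ F (z + w) := by
    intro z
    have h : HasFDerivAt G (fderiv ℝ F (z + w)) z :=
      by
        have h' := (hFd (z + w)).hasFDerivAt.comp z ((hasFDerivAt_id (𝕜 := ℝ) z).add_const w)
        rw [ContinuousLinearMap.comp_id] at h'
        exact h'
    exact h.fderiv
  have hGw : ∀ z : ℂ, wirtinger G z = wirtinger F (z + w) := by
    intro z; unfold wirtinger; rw [hGfd]
  have step2 : (∫ z : ℂ, wirtinger F z / (z - w)) = ∫ z : ℂ, wirtinger G z / z := by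
    rw [← integral_add_right_eq_self (μ := volume) (fun z : ℂ => wirtinger F z / (z - w)) w]
    congr 1
    ext z
    rw [hGw, add_sub_cancel_right]
  have hGsupp : ∀ z : ℂ, ‖w‖ + 2 ≤ ‖z‖ → G z = 0 := by
    intro z hz
    have h1 : (1:ℝ) < ‖z + w‖ := by
      have h2 := norm_add_le (z + w) (-w)
      rw [add_neg_cancel_right, norm_neg] at h2
      linarith
    simp only [hGdef, hFdef]
    apply Set.indicator_of_notMem
    intro hmem
    rw [Metric.mem_closedBall, Complex.dist_eq, sub_zero] at hmem
    linarith
  have hzero := pompeiu_zero G hGc (‖w‖ + 2)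
    (by positivity) hGsupp
  have hG0 : G 0 = f w := by
    show F (0 + w) = f w
    rw [zero_add]
    exact hFf w (Or.inl hw)
  rw [step1, step2, hzero, hG0]
  have hpi : (Real.pi : ℂ) ≠ 0 := by
    exact_mod_cast Real.pi_ne_zero
  field_simp
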